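/- Let G be a finite group with exactly k subgroups of prime order. Then the number of subgroups of G not attaining the maximum Chermak–Delgado measure is at least k. -/
import Mathlib


/-- The Chermak–Delgado measure of a subgroup. -/
noncomputable def cdMeasure {G : Type*} [Group G] (H : Subgroup G) : ℕ :=
  Nat.card H * Nat.card (Subgroup.centralizer (H : Set G))

namespace CDProofAux

open Subgroup Pointwise

variable {G : Type*} [Group G] [Finite G]

lemma cd_pos (H : Subgroup G) : 0 < cdMeasure H :=
  Nat.mul_pos Nat.card_pos Nat.card_pos

lemma centralizer_bot_eq : Subgroup.centralizer ((⊥ : Subgroup G) : Set G) = ⊤ := by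
  rw [Subgroup.coe_bot]
  refine top_unique fun g _ => Subgroup.mem_centralizer_iff.mpr ?_
  intro h hh
  rw [Set.mem_singleton_iff] at hh
  subst hh
  simp

lemma cd_bot : cdMeasure (⊥ : Subgroup G) = Nat.card G := by
  rw [cdMeasure, Subgroup.card_bot, one_mul, centralizer_bot_eq, Subgroup.card_top]

lemma le_centralizer_swap {B C : Subgroup G}
    (h : B ≤ Subgroup.centralizer (C : Set G)) :
    C ≤ Subgroup.centralizer (B : Set G) := fun c hc =>
  Subgroup.mem_centralizer_iff.mpr fun b hb =>
    (Subgroup.mem_centralizer_iff.mp (h hb) c hc).symm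

lemma centralizer_sup' (B C : Subgroup G) :
    Subgroup.centralizer ((B ⊔ C : Subgroup G) : Set G)
      = Subgroup.centralizer (B : Set G) ⊓ Subgroup.centralizer (C : Set G) := by
  apply le_antisymm
  · exact le_inf (Subgroup.centralizer_le (SetLike.coe_subset_coe.mpr le_sup_left))
      (Subgroup.centralizer_le (SetLike.coe_subset_coe.mpr le_sup_right))
  · rintro x ⟨hxB, hxC⟩
    have hB : B ≤ Subgroup.centralizer ({x} : Set G) := by
      intro b hb
      exact Subgroup.mem_centralizer_iff.mpr fun y hy => by
        rw [Set.mem_singleton_iff] at hy; subst hy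
        exact (Subgroup.mem_centralizer_iff.mp hxB b hb).symm
    have hC : C ≤ Subgroup.centralizer ({x} : Set G) := by
      intro c hc
      exact Subgroup.mem_centralizer_iff.mpr fun y hy => by
        rw [Set.mem_singleton_iff] at hy; subst hy
        exact (Subgroup.mem_centralizer_iff.mp hxC c hc).symm
    refine Subgroup.mem_centralizer_iff.mpr fun y hy => ?_
    have := Subgroup.mem_centralizer_iff.mp ((sup_le hB hC) hy) x (Set.mem_singleton x)
    exact this.symm

lemma card_mul_card_le_card_sup {B C : Subgroup G} (h : B ⊓ C = ⊥) :
    Nat.card B * Nat.card C ≤ Nat.card (B ⊔ C : Subgroup G) := by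
  rw [← Nat.card_prod]
  refine Nat.card_le_card_of_injective
    (fun bc : B × C => (⟨bc.1 * bc.2,
      mul_mem ((le_sup_left : B ≤ B ⊔ C) bc.1.2)
        ((le_sup_right : C ≤ B ⊔ C) bc.2.2)⟩ : (B ⊔ C : Subgroup G))) ?_
  rintro ⟨⟨b, hb⟩, ⟨c, hc⟩⟩ ⟨⟨b', hb'⟩, ⟨c', hc'⟩⟩ heq
  have heq' : b * c = b' * c' := congrArg Subtype.val heq
  have hkey : b'⁻¹ * b = c' * c⁻¹ := by
    calc b'⁻¹ * b = b'⁻¹ * (b * c) * c⁻¹ := by group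
      _ = b'⁻¹ * (b' * c') * c⁻¹ := by rw [heq']
      _ = c' * c⁻¹ := by group
  have hmem : b'⁻¹ * b ∈ B ⊓ C :=
    Subgroup.mem_inf.mpr ⟨mul_mem (inv_mem hb') hb,
      by rw [hkey]; exact mul_mem hc' (inv_mem hc)⟩
  rw [h, Subgroup.mem_bot] at hmem
  have hb2 : b = b' := by
    have := hmem
    rw [inv_mul_eq_one] at this
    exact this.symm
  have hc2 : c = c' := by
    have : c' * c⁻¹ = 1 := by rw [← hkey]; exact hmem
    rw [mul_inv_eq_one] at this
    exact this.symm
  simp [Prod.ext_iff, Subtype.ext_iff, hb2, hc2]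

lemma index_centralizer_eq {A : Subgroup G} (h : cdMeasure A = Nat.card G) :
    (Subgroup.centralizer (A : Set G)).index = Nat.card A := by
  rw [cdMeasure] at h
  have h2 := Subgroup.card_mul_index (Subgroup.centralizer (A : Set G))
  refine Nat.eq_of_mul_eq_mul_left
    (Nat.card_pos : 0 < Nat.card (Subgroup.centralizer (A : Set G))) ?_
  rw [h2, ← h, mul_comm]

lemma card_conj (g : G) (A : Subgroup G) :
    Nat.card (MulAut.conj g • A : Subgroup G) = Nat.card A :=
  (Nat.card_congr (Subgroup.equivSMul (MulAut.conj g) A).toEquiv).symm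

lemma centralizer_conj (g : G) (A : Subgroup G) :
    Subgroup.centralizer ((MulAut.conj g • A : Subgroup G) : Set G)
      = MulAut.conj g • Subgroup.centralizer (A : Set G) := by
  ext x
  rw [Subgroup.mem_smul_pointwise_iff_exists]
  constructor
  · intro hx
    refine ⟨g⁻¹ * x * g, ?_, ?_⟩
    · refine Subgroup.mem_centralizer_iff.mpr fun a ha => ?_
      have hmem : g * a * g⁻¹ ∈ (MulAut.conj g • A : Subgroup G) :=
        (Subgroup.mem_smul_pointwise_iff_exists _ _ _).mpr
          ⟨a, ha, by simp [MulAut.smul_def, MulAut.conj_apply]⟩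
      have h1 : (g * a * g⁻¹) * x = x * (g * a * g⁻¹) :=
        Subgroup.mem_centralizer_iff.mp hx _ hmem
      calc a * (g⁻¹ * x * g) = g⁻¹ * ((g * a * g⁻¹) * x) * g := by group
        _ = g⁻¹ * (x * (g * a * g⁻¹)) * g := by rw [h1]
        _ = (g⁻¹ * x * g) * a := by group
    · simp only [MulAut.smul_def, MulAut.conj_apply]
      group
  · rintro ⟨s, hs, rfl⟩
    simp only [MulAut.smul_def, MulAut.conj_apply]
    refine Subgroup.mem_centralizer_iff.mpr fun y hy => ?_
    obtain ⟨a, ha, rfl⟩ := (Subgroup.mem_smul_pointwise_iff_exists _ _ _).mp hy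
    simp only [MulAut.smul_def, MulAut.conj_apply]
    have hcomm : a * s = s * a := Subgroup.mem_centralizer_iff.mp hs a ha
    calc (g * a * g⁻¹) * (g * s * g⁻¹) = g * (a * s) * g⁻¹ := by group
      _ = g * (s * a) * g⁻¹ := by rw [hcomm]
      _ = (g * s * g⁻¹) * (g * a * g⁻¹) := by group

lemma cd_conj (g : G) (A : Subgroup G) :
    cdMeasure (MulAut.conj g • A) = cdMeasure A := by
  rw [cdMeasure, cdMeasure, card_conj, centralizer_conj, card_conj]

lemma inf_eq_bot_of_not_le {B D : Subgroup G} (hp : (Nat.card B).Prime)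
    (h : ¬ B ≤ D) : B ⊓ D = ⊥ := by
  have hdvd : Nat.card (B ⊓ D : Subgroup G) ∣ Nat.card B :=
    Subgroup.card_dvd_of_le inf_le_left
  rcases hp.eq_one_or_self_of_dvd _ hdvd with h1 | h1
  · exact Subgroup.card_eq_one.mp h1
  · exfalso
    apply h
    have heq : B ⊓ D = B :=
      Subgroup.eq_of_le_of_card_ge inf_le_left (le_of_eq h1.symm)
    exact heq ▸ inf_le_right

lemma inf_eq_bot_of_primes {B C : Subgroup G} (hB : (Nat.card B).Prime)
    (hC : (Nat.card C).Prime) (hne : B ≠ C) : B ⊓ C = ⊥ := by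
  apply inf_eq_bot_of_not_le hB
  intro hle
  have hdvd := Subgroup.card_dvd_of_le hle
  have hcc : Nat.card B = Nat.card C := (Nat.prime_dvd_prime_iff_eq hB hC).mp hdvd
  exact hne (Subgroup.eq_of_le_of_card_ge hle hcc.ge)

lemma key_commute {p : ℕ} (hp : p.Prime)
    (hmax : ∀ B : Subgroup G, cdMeasure B ≤ Nat.card G)
    {B C : Subgroup G}
    (hB : Nat.card B = p) (hC : Nat.card C = p)
    (hmB : cdMeasure B = Nat.card G) (hmC : cdMeasure C = Nat.card G)
    (hne : B ≠ C) :
    B ≤ Subgroup.centralizer (C : Set G) := by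
  haveI : Fact p.Prime := ⟨hp⟩
  have hbot : B ⊓ C = ⊥ := inf_eq_bot_of_primes (by rw [hB]; exact hp) (by rw [hC]; exact hp) hne
  have cardD_ge : p * p ≤ Nat.card (B ⊔ C : Subgroup G) := by
    have := card_mul_card_le_card_sup hbot; rwa [hB, hC] at this
  have iCB : (Subgroup.centralizer (B : Set G)).index = p := by
    rw [index_centralizer_eq hmB, hB]
  have iCC : (Subgroup.centralizer (C : Set G)).index = p := by
    rw [index_centralizer_eq hmC, hC]
  have iCD_le : (Subgroup.centralizer ((B ⊔ C : Subgroup G) : Set G)).index ≤ p * p := by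
    rw [centralizer_sup']
    exact le_trans Subgroup.index_inf_le (by rw [iCB, iCC])
  have hCDcard := Subgroup.card_mul_index
    (Subgroup.centralizer ((B ⊔ C : Subgroup G) : Set G))
  have h1 : Nat.card (B ⊔ C : Subgroup G)
      * Nat.card (Subgroup.centralizer ((B ⊔ C : Subgroup G) : Set G)) ≤ Nat.card G := by
    have := hmax (B ⊔ C); rwa [cdMeasure] at this
  have h2 : Nat.card G
      ≤ Nat.card (Subgroup.centralizer ((B ⊔ C : Subgroup G) : Set G)) * (p * p) := by
    rw [← hCDcard]
    exact Nat.mul_le_mul_left _ iCD_le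
  have h3 := h1.trans h2
  rw [mul_comm (Nat.card (B ⊔ C : Subgroup G))] at h3
  have cardD_le : Nat.card (B ⊔ C : Subgroup G) ≤ p * p :=
    Nat.le_of_mul_le_mul_left h3 Nat.card_pos
  have cardD_eq : Nat.card (B ⊔ C : Subgroup G) = p ^ 2 := by
    rw [pow_two]; exact le_antisymm cardD_le cardD_ge
  have comm := IsPGroup.commutative_of_card_eq_prime_sq cardD_eq
  intro b hb
  refine Subgroup.mem_centralizer_iff.mpr fun c hc => ?_
  have hbD : b ∈ B ⊔ C := (le_sup_left : B ≤ B ⊔ C) hb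
  have hcD : c ∈ B ⊔ C := (le_sup_right : C ≤ B ⊔ C) hc
  exact congrArg Subtype.val (comm ⟨c, hcD⟩ ⟨b, hbD⟩)

lemma sup_measure_eq {p : ℕ} (hp : p.Prime) (A : Subgroup G)
    (hA : Nat.card A = p)
    (hmax : ∀ B : Subgroup G, cdMeasure B ≤ Nat.card G)
    (hmA : cdMeasure A = Nat.card G) :
    ∀ (s : Finset G) (hs : s.Nonempty),
      cdMeasure (⨆ g ∈ s, MulAut.conj g • A) = Nat.card G := by
  classical
  have hcard_conj : ∀ g : G, Nat.card (MulAut.conj g • A : Subgroup G) = p :=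
    fun g => (card_conj g A).trans hA
  have hcd_conj : ∀ g : G, cdMeasure (MulAut.conj g • A) = Nat.card G :=
    fun g => (cd_conj g A).trans hmA
  intro s hs
  induction hs using Finset.Nonempty.cons_induction with
  | singleton a =>
    simp only [Finset.mem_singleton, iSup_iSup_eq_left]
    exact hcd_conj a
  | cons a s h hs ih =>
    rw [Finset.cons_eq_insert, Finset.iSup_insert]
    set A' := MulAut.conj a • A with hA'def
    set D := ⨆ g ∈ s, MulAut.conj g • A with hDdef
    by_cases hle : A' ≤ D
    · rw [sup_eq_right.mpr hle]; exact ih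
    · have hbot : A' ⊓ D = ⊥ :=
        inf_eq_bot_of_not_le (by rw [hcard_conj a]; exact hp) hle
      have hD := ih
      rw [cdMeasure] at hD
      have iCA' : (Subgroup.centralizer (A' : Set G)).index = p := by
        rw [index_centralizer_eq (hcd_conj a), hcard_conj a]
      have iCD : (Subgroup.centralizer (D : Set G)).index = Nat.card D := by
        refine Nat.eq_of_mul_eq_mul_left
          (Nat.card_pos : 0 < Nat.card (Subgroup.centralizer (D : Set G))) ?_
        rw [Subgroup.card_mul_index, ← hD, mul_comm]
      have isup_card : p * Nat.card D ≤ Nat.card (A' ⊔ D : Subgroup G) := by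
        have := card_mul_card_le_card_sup hbot
        rwa [hcard_conj a] at this
      have icent : (Subgroup.centralizer ((A' ⊔ D : Subgroup G) : Set G)).index
          ≤ p * Nat.card D := by
        rw [centralizer_sup']
        exact le_trans Subgroup.index_inf_le (by rw [iCA', iCD])
      have hm_le : cdMeasure (A' ⊔ D) ≤ Nat.card G := hmax _
      have hcc := Subgroup.card_mul_index
        (Subgroup.centralizer ((A' ⊔ D : Subgroup G) : Set G))
      have hposd : 0 < p * Nat.card D :=
        Nat.mul_pos hp.pos Nat.card_pos
      have hchain : (p * Nat.card D) * Nat.card G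
          ≤ (p * Nat.card D) * cdMeasure (A' ⊔ D) := by
        calc (p * Nat.card D) * Nat.card G
            ≤ Nat.card (A' ⊔ D : Subgroup G) * Nat.card G :=
              Nat.mul_le_mul_right _ isup_card
          _ = cdMeasure (A' ⊔ D)
              * (Subgroup.centralizer ((A' ⊔ D : Subgroup G) : Set G)).index := by
              rw [cdMeasure, mul_assoc, hcc]
          _ ≤ cdMeasure (A' ⊔ D) * (p * Nat.card D) :=
              Nat.mul_le_mul_left _ icent
          _ = (p * Nat.card D) * cdMeasure (A' ⊔ D) := mul_comm _ _
      exact le_antisymm hm_le (Nat.le_of_mul_le_mul_left hchain hposd)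

lemma hard_case {p : ℕ} (hp : p.Prime) (A : Subgroup G)
    (hA : Nat.card A = p)
    (hmax : ∀ B : Subgroup G, cdMeasure B ≤ Nat.card G)
    (hmA : cdMeasure A = Nat.card G) : False := by
  classical
  haveI : Fact p.Prime := ⟨hp⟩
  cases nonempty_fintype G
  have hcard_conj : ∀ g : G, Nat.card (MulAut.conj g • A : Subgroup G) = p :=
    fun g => (card_conj g A).trans hA
  have hcd_conj : ∀ g : G, cdMeasure (MulAut.conj g • A) = Nat.card G :=
    fun g => (cd_conj g A).trans hmA
  set J : Subgroup G := ⨆ g : G, MulAut.conj g • A with hJdef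
  have hJ_eq : (⨆ g ∈ (Finset.univ : Finset G), MulAut.conj g • A) = J :=
    iSup_congr fun g => iSup_pos (Finset.mem_univ g)
  have hmJ : cdMeasure J = Nat.card G := by
    rw [← hJ_eq]
    exact sup_measure_eq hp A hA hmax hmA Finset.univ ⟨1, Finset.mem_univ 1⟩
  have hAJ : A ≤ J := by
    have h1 : MulAut.conj (1 : G) • A = A := by
      rw [map_one, one_smul]
    exact h1 ▸ le_iSup (fun g => MulAut.conj g • A) (1 : G)
  -- J is normal
  have hJnormal : J.Normal := by
    constructor
    intro x hx g
    refine Subgroup.iSup_induction' (S := fun g : G => MulAut.conj g • A)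
      (C := fun y _ => g * y * g⁻¹ ∈ J) ?_ ?_ ?_ hx
    · intro i y hy
      have hmem : g * y * g⁻¹ ∈ MulAut.conj (g * i) • A := by
        obtain ⟨a, ha, rfl⟩ := (Subgroup.mem_smul_pointwise_iff_exists _ _ _).mp hy
        refine (Subgroup.mem_smul_pointwise_iff_exists _ _ _).mpr ⟨a, ha, ?_⟩
        simp only [MulAut.smul_def, MulAut.conj_apply]
        group
      exact (le_iSup (fun g => MulAut.conj g • A) (g * i)) hmem
    · simpa using J.one_mem
    · intro y z _ _ ihy ihz
      have hyz : g * (y * z) * g⁻¹ = (g * y * g⁻¹) * (g * z * g⁻¹) := by group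
      rw [hyz]; exact mul_mem ihy ihz
  -- all conjugates of A pairwise commute, so J is abelian
  have self_comm : ∀ g : G, (MulAut.conj g • A : Subgroup G)
      ≤ Subgroup.centralizer ((MulAut.conj g • A : Subgroup G) : Set G) := by
    intro g
    haveI := isCyclic_of_prime_card (hcard_conj g)
    letI : CommGroup (MulAut.conj g • A : Subgroup G) := IsCyclic.commGroup
    intro b hb
    refine Subgroup.mem_centralizer_iff.mpr fun c hc => ?_
    exact congrArg Subtype.val
      (mul_comm (⟨c, hc⟩ : (MulAut.conj g • A : Subgroup G)) ⟨b, hb⟩)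
  have pair_comm : ∀ g h : G, (MulAut.conj g • A : Subgroup G)
      ≤ Subgroup.centralizer ((MulAut.conj h • A : Subgroup G) : Set G) := by
    intro g h
    by_cases he : MulAut.conj g • A = MulAut.conj h • A
    · rw [he]; exact self_comm h
    · exact key_commute hp hmax (hcard_conj g) (hcard_conj h)
        (hcd_conj g) (hcd_conj h) he
  have hJC : J ≤ Subgroup.centralizer (J : Set G) := by
    refine iSup_le fun h => ?_
    refine le_centralizer_swap ?_
    exact iSup_le fun g => pair_comm g h
  have hJab : ∀ x y : G, x ∈ J → y ∈ J → Commute x y := by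
    intro x y hx hy
    exact (Subgroup.mem_centralizer_iff.mp (hJC hx) y hy).symm
  -- every element of J has p-th power 1
  have hxp : ∀ x ∈ J, x ^ p = 1 := by
    intro x hx
    refine Subgroup.iSup_induction' (S := fun g : G => MulAut.conj g • A)
      (C := fun y _ => y ^ p = 1) ?_ (one_pow p) ?_ hx
    · intro i y hy
      have h1 : (⟨y, hy⟩ : (MulAut.conj i • A : Subgroup G)) ^ p = 1 := by
        rw [← hcard_conj i]
        exact pow_card_eq_one'
      have h2 := congrArg Subtype.val h1
      simpa using h2
    · intro y z hy hz ihy ihz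
      rw [(hJab y z hy hz).mul_pow, ihy, ihz, one_mul]
  have hJpgroup : IsPGroup p J := by
    intro x
    exact ⟨1, by
      rw [pow_one]
      exact Subtype.ext (by rw [Subgroup.coe_pow]; exact hxp (x : G) x.2)⟩
  obtain ⟨t, htJ⟩ := (IsPGroup.iff_card (p := p)).mp hJpgroup
  -- the centralizer L of J has index a power of p
  set L := Subgroup.centralizer (J : Set G) with hLdef
  have hiL : L.index = Nat.card J := index_centralizer_eq hmJ
  -- Sylow subgroup containing J
  obtain ⟨P, hJP⟩ := hJpgroup.exists_le_sylow
  haveI : (P : Subgroup G).FiniteIndex := ⟨Subgroup.index_ne_zero_of_finite⟩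
  have hPi : ¬ p ∣ (P : Subgroup G).index := P.not_dvd_index
  have htop : (P : Subgroup G) ⊔ L = ⊤ := by
    rw [← Subgroup.index_eq_one]
    have d1 : ((P : Subgroup G) ⊔ L).index ∣ (P : Subgroup G).index :=
      Subgroup.index_dvd_of_le le_sup_left
    have d2 : ((P : Subgroup G) ⊔ L).index ∣ p ^ t := by
      rw [← htJ, ← hiL]
      exact Subgroup.index_dvd_of_le le_sup_right
    obtain ⟨k, hk, hke⟩ := (Nat.dvd_prime_pow hp).mp d2
    cases k with
    | zero => simpa using hke
    | succ k =>
      exfalso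
      apply hPi
      refine dvd_trans ?_ d1
      rw [hke]
      exact dvd_pow_self p (Nat.succ_ne_zero k)
  -- conjugation action of P on J, fixed point argument
  haveI := hJnormal
  letI : MulAction ↥(P : Subgroup G) ↥J :=
    MulAction.compHom _ ((MulAut.conjNormal (H := J)).comp (P : Subgroup G).subtype)
  have hsmul_def : ∀ (c : ↥(P : Subgroup G)) (x : ↥J),
      c • x = MulAut.conjNormal (H := J) (c : G) x := fun c x => rfl
  have hfix1 : (1 : ↥J) ∈ MulAction.fixedPoints ↥(P : Subgroup G) ↥J := by
    intro c
    rw [hsmul_def, map_one]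
  have hpJ : p ∣ Nat.card ↥J := by
    rw [← hA]; exact Subgroup.card_dvd_of_le hAJ
  obtain ⟨b, hbfix, hb1⟩ :=
    P.isPGroup'.exists_fixed_point_of_prime_dvd_card_of_fixed_point ↥J hpJ hfix1
  have hxJ : (b : G) ∈ J := b.2
  have hxne : (b : G) ≠ 1 := by
    intro h
    exact hb1 (Subtype.ext h.symm)
  have hxP : ∀ c ∈ (P : Subgroup G), c * (b : G) = (b : G) * c := by
    intro c hc
    have h1 := hbfix ⟨c, hc⟩
    rw [hsmul_def] at h1
    have h2 : c * (b : G) * c⁻¹ = (b : G) := by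
      rw [← MulAut.conjNormal_apply c b]
      exact congrArg Subtype.val h1
    calc c * (b : G) = (c * (b : G) * c⁻¹) * c := by group
      _ = (b : G) * c := by rw [h2]
  -- the centralizer of <b> is everything
  have hcx : Subgroup.centralizer ((Subgroup.zpowers (b : G) : Subgroup G) : Set G) = ⊤ := by
    rw [eq_top_iff]
    intro y _
    refine Subgroup.mem_centralizer_iff.mpr fun z hz => ?_
    obtain ⟨k, rfl⟩ := Subgroup.mem_zpowers_iff.mp hz
    have hPle : (P : Subgroup G) ≤ Subgroup.centralizer ({(b : G)} : Set G) := by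
      intro c hc
      refine Subgroup.mem_centralizer_iff.mpr fun w hw => ?_
      rw [Set.mem_singleton_iff] at hw; subst hw
      exact (hxP c hc).symm
    have hLle : L ≤ Subgroup.centralizer ({(b : G)} : Set G) := by
      intro c hc
      refine Subgroup.mem_centralizer_iff.mpr fun w hw => ?_
      rw [Set.mem_singleton_iff] at hw; subst hw
      exact Subgroup.mem_centralizer_iff.mp hc (b : G) hxJ
    have hyc : y ∈ Subgroup.centralizer ({(b : G)} : Set G) := by
      apply sup_le hPle hLle
      rw [htop]; exact Subgroup.mem_top y
    have hcomm : Commute (b : G) y :=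
      Subgroup.mem_centralizer_iff.mp hyc (b : G) (Set.mem_singleton _)
    exact (hcomm.zpow_left k)
  have hob : orderOf (b : G) = p := orderOf_eq_prime (hxp (b : G) hxJ) hxne
  have hmb : cdMeasure (Subgroup.zpowers (b : G)) = p * Nat.card G := by
    rw [cdMeasure, Nat.card_zpowers, hob, hcx, Subgroup.card_top]
  have h2 := hmax (Subgroup.zpowers (b : G))
  rw [hmb] at h2
  have hple : p ≤ 1 := by
    have h3 : p * Nat.card G ≤ 1 * Nat.card G := by rwa [one_mul]
    exact Nat.le_of_mul_le_mul_right h3 Nat.card_pos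
  exact absurd hple (by have := hp.one_lt; omega)

lemma N1 (H : Subgroup G) (hp : (Nat.card H).Prime)
    (hmaxH : ∀ K : Subgroup G, cdMeasure K ≤ cdMeasure H) :
    ¬ (∀ K : Subgroup G, cdMeasure K ≤ cdMeasure (⊥ : Subgroup G)) := by
  intro hmaxB
  have hb : cdMeasure (⊥ : Subgroup G) = Nat.card G := cd_bot
  have hmax' : ∀ B : Subgroup G, cdMeasure B ≤ Nat.card G :=
    fun B => (hmaxB B).trans_eq hb
  have hmH : cdMeasure H = Nat.card G :=
    le_antisymm (hmax' H) (hb ▸ hmaxH ⊥)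
  exact hard_case hp H rfl hmax' hmH

lemma N2 (H K : Subgroup G) (hpH : (Nat.card H).Prime) (hpK : (Nat.card K).Prime)
    (hmH : ∀ B : Subgroup G, cdMeasure B ≤ cdMeasure H)
    (hmK : ∀ B : Subgroup G, cdMeasure B ≤ cdMeasure K) : H = K := by
  by_contra hne
  have hM0K : cdMeasure K = cdMeasure H := le_antisymm (hmH K) (hmK H)
  have hbot : H ⊓ K = ⊥ := inf_eq_bot_of_primes hpH hpK hne
  have e1 := Subgroup.card_mul_index (Subgroup.centralizer (H : Set G))
  have e2 := Subgroup.card_mul_index (Subgroup.centralizer (K : Set G))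
  have e3 := Subgroup.card_mul_index
    (Subgroup.centralizer ((H ⊔ K : Subgroup G) : Set G))
  have icd_le : (Subgroup.centralizer ((H ⊔ K : Subgroup G) : Set G)).index
      ≤ (Subgroup.centralizer (H : Set G)).index
        * (Subgroup.centralizer (K : Set G)).index := by
    rw [centralizer_sup']; exact Subgroup.index_inf_le
  have big : (Nat.card H * Nat.card K) * Nat.card G
      ≤ cdMeasure (H ⊔ K)
        * ((Subgroup.centralizer (H : Set G)).index
          * (Subgroup.centralizer (K : Set G)).index) := by
    calc (Nat.card H * Nat.card K) * Nat.card G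
        ≤ Nat.card (H ⊔ K : Subgroup G) * Nat.card G :=
          Nat.mul_le_mul_right _ (card_mul_card_le_card_sup hbot)
      _ = cdMeasure (H ⊔ K)
          * (Subgroup.centralizer ((H ⊔ K : Subgroup G) : Set G)).index := by
          rw [cdMeasure, mul_assoc, e3]
      _ ≤ _ := Nat.mul_le_mul_left _ icd_le
  have big2 : cdMeasure H * cdMeasure K
      * ((Subgroup.centralizer (H : Set G)).index
        * (Subgroup.centralizer (K : Set G)).index)
      = (Nat.card H * Nat.card K) * (Nat.card G * Nat.card G) := by
    rw [cdMeasure, cdMeasure]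
    nth_rewrite 1 [← e1]
    rw [← e2]; ring
  have hidxpos : 0 < (Subgroup.centralizer (H : Set G)).index
      * (Subgroup.centralizer (K : Set G)).index :=
    Nat.mul_pos (Nat.pos_of_ne_zero Subgroup.index_ne_zero_of_finite)
      (Nat.pos_of_ne_zero Subgroup.index_ne_zero_of_finite)
  have hstep : (cdMeasure H * cdMeasure K)
      * ((Subgroup.centralizer (H : Set G)).index
        * (Subgroup.centralizer (K : Set G)).index)
      ≤ (cdMeasure (H ⊔ K) * Nat.card G)
        * ((Subgroup.centralizer (H : Set G)).index
          * (Subgroup.centralizer (K : Set G)).index) := by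
    calc (cdMeasure H * cdMeasure K)
        * ((Subgroup.centralizer (H : Set G)).index
          * (Subgroup.centralizer (K : Set G)).index)
        = ((Nat.card H * Nat.card K) * Nat.card G) * Nat.card G := by
          rw [big2]; ring
      _ ≤ (cdMeasure (H ⊔ K)
          * ((Subgroup.centralizer (H : Set G)).index
            * (Subgroup.centralizer (K : Set G)).index)) * Nat.card G :=
          Nat.mul_le_mul_right _ big
      _ = (cdMeasure (H ⊔ K) * Nat.card G)
          * ((Subgroup.centralizer (H : Set G)).index
            * (Subgroup.centralizer (K : Set G)).index) := by ring
  have hfin : cdMeasure H * cdMeasure K ≤ cdMeasure (H ⊔ K) * Nat.card G :=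
    Nat.le_of_mul_le_mul_right hstep hidxpos
  rw [hM0K] at hfin
  have hfin2 : cdMeasure H * cdMeasure H ≤ cdMeasure H * Nat.card G := by
    calc cdMeasure H * cdMeasure H ≤ cdMeasure (H ⊔ K) * Nat.card G := hfin
      _ ≤ cdMeasure H * Nat.card G := Nat.mul_le_mul_right _ (hmH _)
  have hMn : cdMeasure H ≤ Nat.card G :=
    Nat.le_of_mul_le_mul_left hfin2 (cd_pos H)
  have hmax' : ∀ B : Subgroup G, cdMeasure B ≤ Nat.card G :=
    fun B => (hmH B).trans hMn
  have hmHn : cdMeasure H = Nat.card G := by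
    refine le_antisymm hMn ?_
    have := hmH ⊥
    rw [cd_bot] at this
    exact this
  exact hard_case hpH H rfl hmax' hmHn

end CDProofAux

theorem delta_cd_ge_num_prime_order_subgroups
    (G : Type*) [Group G] [Finite G] (k : ℕ)
    (hk : Nat.card {H : Subgroup G // (Nat.card H).Prime} = k) :
    k ≤ Nat.card {H : Subgroup G // ¬ ∀ K : Subgroup G, cdMeasure K ≤ cdMeasure H} := by
  classical
  subst hk
  set f : {H : Subgroup G // (Nat.card H).Prime} →
      {H : Subgroup G // ¬ ∀ K : Subgroup G, cdMeasure K ≤ cdMeasure H} :=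
    fun H => if h : ∀ K : Subgroup G, cdMeasure K ≤ cdMeasure H.1 then
        ⟨⊥, CDProofAux.N1 H.1 H.2 h⟩
      else ⟨H.1, h⟩ with hfdef
  apply Nat.card_le_card_of_injective f
  intro H1 H2 heq
  by_cases h1 : ∀ K : Subgroup G, cdMeasure K ≤ cdMeasure H1.1 <;>
    by_cases h2 : ∀ K : Subgroup G, cdMeasure K ≤ cdMeasure H2.1
  · exact Subtype.ext (CDProofAux.N2 H1.1 H2.1 H1.2 H2.2 h1 h2)
  · exfalso
    rw [hfdef] at heq
    simp only [dif_pos h1, dif_neg h2] at heq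
    have hbot : (⊥ : Subgroup G) = H2.1 := congrArg Subtype.val heq
    have := H2.2
    rw [← hbot, Subgroup.card_bot] at this
    exact Nat.not_prime_one this
  · exfalso
    rw [hfdef] at heq
    simp only [dif_neg h1, dif_pos h2] at heq
    have hbot : H1.1 = (⊥ : Subgroup G) := congrArg Subtype.val heq
    have := H1.2
    rw [hbot, Subgroup.card_bot] at this
    exact Nat.not_prime_one this
  · rw [hfdef] at heq
    simp only [dif_neg h1, dif_neg h2] at heq
    rw [Subtype.mk.injEq] at heq
    exact Subtype.ext heq
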